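/- Let Y be a finite nonempty type, r : Y → ℝ, α > 0, and n ≥ 2 an integer. Let D : (Fin n → Y) × Fin n → ℝ satisfy D(ys, i) > 0 for all ys and i, and the n-ary Bradley–Terry consistency D(ys, i) * exp(r(ys j)) = D(ys, j) * exp(r(ys i)) for all ys, i, j. Let μ : (Fin n → Y) → ℝ satisfy μ(ys) > 0 for all ys and μ(ys ∘ σ) = μ(ys) for every permutation σ of Fin n. Define L on the open set of functions π : Y → ℝ with strictly positive values by L(π) = −(1/α) * ∑_{ys} ∑_{i} D(ys, i) * μ(ys) * log( π(ys i)^α / ∑_{j} π(ys j)^α ), and let ρ(y) = exp(r(y)/α) / ∑_{y'} exp(r(y')/α). Then for every π with π(y) > 0 for all y, ∑_{y} π(y) = 1, and π ≠ ρ, it holds that ∑_{y} (∂L/∂π(y))(π) * (π(y) − ρ(y)) > 0. -/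

import Mathlib

open Finset Filter

section SPOAux

lemma spo_rpow_mono_aux {α : ℝ} (hα : 0 < α) {a b : ℝ} (ha : 0 < a) (hb : 0 < b) :
    0 ≤ (b ^ α - a ^ α) * (b - a) := by
  rcases le_total a b with h | h
  · exact mul_nonneg (by simpa using sub_nonneg.2 (Real.rpow_le_rpow ha.le h hα.le))
      (sub_nonneg.2 h)
  · have h1 : b ^ α - a ^ α ≤ 0 := sub_nonpos.2 (Real.rpow_le_rpow hb.le h hα.le)
    have h2 : b - a ≤ 0 := sub_nonpos.2 h
    nlinarith

lemma spo_rpow_mono_aux_strict {α : ℝ} (hα : 0 < α) {a b : ℝ} (ha : 0 < a) (hb : 0 < b)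
    (hne : a ≠ b) : 0 < (b ^ α - a ^ α) * (b - a) := by
  rcases lt_or_gt_of_ne hne with h | h
  · exact mul_pos (sub_pos.2 (Real.rpow_lt_rpow ha.le h hα)) (sub_pos.2 h)
  · have h1 : b ^ α - a ^ α < 0 := sub_neg.2 (Real.rpow_lt_rpow hb.le h hα)
    have h2 : b - a < 0 := sub_neg.2 h
    nlinarith

lemma spo_core_identity {n : ℕ} {α : ℝ} (hα : 0 < α) (v w : Fin n → ℝ)
    (hv : ∀ j, 0 < v j) (hw : ∀ j, 0 < w j) :
    2 * ((∑ k, v k ^ α) *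
      ∑ j, ((∑ k, w k ^ α) * v j ^ (α - 1) / (∑ k, v k ^ α) - w j ^ α / v j) * (v j - w j))
    = ∑ j, ∑ k, (v j ^ α * v k ^ α) *
        (((w k / v k) ^ α - (w j / v j) ^ α) * (w k / v k - w j / v j)) := by
  have hvj : ∀ j, (v j : ℝ) ≠ 0 := fun j => (hv j).ne'
  have hwv : ∀ j, (w j / v j) ^ α = w j ^ α / v j ^ α :=
    fun j => Real.div_rpow (hw j).le (hv j).le α
  have hv1 : ∀ j, v j ^ (α - 1) = v j ^ α / v j := by
    intro j
    rw [Real.rpow_sub (hv j), Real.rpow_one]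
  by_cases hS0 : (∑ k, v k ^ α) = 0
  · have hn : IsEmpty (Fin n) := by
      by_contra h
      rw [not_isEmpty_iff] at h
      obtain ⟨j⟩ := h
      have : (0:ℝ) < ∑ k, v k ^ α :=
        sum_pos (fun k _ => Real.rpow_pos_of_pos (hv k) α) ⟨j, mem_univ j⟩
      exact this.ne' hS0
    simp [hS0]
  have key : ∀ j, (∑ k, v k ^ α) *
      (((∑ k, w k ^ α) * v j ^ (α - 1) / (∑ k, v k ^ α) - w j ^ α / v j) * (v j - w j))
      = ∑ k, (v j ^ α * v k ^ α) *
          (((w k / v k) ^ α - (w j / v j) ^ α) * (1 - w j / v j)) := by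
    intro j
    have hterm : ∀ k, (v j ^ α * v k ^ α) *
        (((w k / v k) ^ α - (w j / v j) ^ α) * (1 - w j / v j))
        = (v j ^ α * w k ^ α - w j ^ α * v k ^ α) * (1 - w j / v j) := by
      intro k
      have h1 : v j ^ α ≠ 0 := (Real.rpow_pos_of_pos (hv j) α).ne'
      have h2 : v k ^ α ≠ 0 := (Real.rpow_pos_of_pos (hv k) α).ne'
      rw [hwv, hwv]
      field_simp
    rw [Finset.sum_congr rfl (fun k _ => hterm k)]
    have hsum : ∑ k, (v j ^ α * w k ^ α - w j ^ α * v k ^ α) * (1 - w j / v j)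
        = (v j ^ α * (∑ k, w k ^ α) - w j ^ α * (∑ k, v k ^ α)) * (1 - w j / v j) := by
      rw [← Finset.sum_mul, Finset.sum_sub_distrib, ← Finset.mul_sum, ← Finset.mul_sum]
    rw [hsum, hv1]
    have h1 : v j ≠ 0 := hvj j
    field_simp
  calc 2 * ((∑ k, v k ^ α) *
      ∑ j, ((∑ k, w k ^ α) * v j ^ (α - 1) / (∑ k, v k ^ α) - w j ^ α / v j) * (v j - w j))
      = 2 * ∑ j, ∑ k, (v j ^ α * v k ^ α) *
          (((w k / v k) ^ α - (w j / v j) ^ α) * (1 - w j / v j)) := by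
        rw [Finset.mul_sum]
        rw [Finset.sum_congr rfl (fun j _ => key j)]
    _ = ∑ j, ∑ k, ((v j ^ α * v k ^ α) *
          (((w k / v k) ^ α - (w j / v j) ^ α) * (1 - w j / v j))
        + (v k ^ α * v j ^ α) *
          (((w j / v j) ^ α - (w k / v k) ^ α) * (1 - w k / v k))) := by
        rw [two_mul]
        nth_rewrite 2 [Finset.sum_comm]
        rw [← Finset.sum_add_distrib]
        exact Finset.sum_congr rfl fun j _ => by rw [← Finset.sum_add_distrib]
    _ = ∑ j, ∑ k, (v j ^ α * v k ^ α) *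
          (((w k / v k) ^ α - (w j / v j) ^ α) * (w k / v k - w j / v j)) := by
        refine Finset.sum_congr rfl fun j _ => Finset.sum_congr rfl fun k _ => by ring

lemma spo_core_nonneg {n : ℕ} {α : ℝ} (hα : 0 < α) (v w : Fin n → ℝ)
    (hv : ∀ j, 0 < v j) (hw : ∀ j, 0 < w j) :
    0 ≤ ∑ j, ((∑ k, w k ^ α) * v j ^ (α - 1) / (∑ k, v k ^ α) - w j ^ α / v j) * (v j - w j) := by
  cases isEmpty_or_nonempty (Fin n) with
  | inl h => simp
  | inr h =>
    have hS : (0:ℝ) < ∑ k, v k ^ α :=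
      sum_pos (fun k _ => Real.rpow_pos_of_pos (hv k) α) univ_nonempty
    have hid := spo_core_identity hα v w hv hw
    have hnn : 0 ≤ ∑ j, ∑ k, (v j ^ α * v k ^ α) *
        (((w k / v k) ^ α - (w j / v j) ^ α) * (w k / v k - w j / v j)) := by
      refine sum_nonneg fun j _ => sum_nonneg fun k _ => ?_
      exact mul_nonneg
        (mul_nonneg (Real.rpow_pos_of_pos (hv j) α).le (Real.rpow_pos_of_pos (hv k) α).le)
        (spo_rpow_mono_aux hα (div_pos (hw j) (hv j)) (div_pos (hw k) (hv k)))
    rw [← hid] at hnn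
    nlinarith

lemma spo_core_pos {n : ℕ} {α : ℝ} (hα : 0 < α) (v w : Fin n → ℝ)
    (hv : ∀ j, 0 < v j) (hw : ∀ j, 0 < w j)
    (hex : ∃ j k : Fin n, w j * v k ≠ w k * v j) :
    0 < ∑ j, ((∑ k, w k ^ α) * v j ^ (α - 1) / (∑ k, v k ^ α) - w j ^ α / v j) * (v j - w j) := by
  obtain ⟨j0, k0, hjk⟩ := hex
  have hS : (0:ℝ) < ∑ k, v k ^ α :=
    sum_pos (fun k _ => Real.rpow_pos_of_pos (hv k) α) ⟨j0, mem_univ _⟩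
  have hid := spo_core_identity hα v w hv hw
  have hne : w j0 / v j0 ≠ w k0 / v k0 := fun h => hjk (by
    rwa [div_eq_div_iff (hv j0).ne' (hv k0).ne'] at h)
  have hpos : 0 < ∑ j, ∑ k, (v j ^ α * v k ^ α) *
      (((w k / v k) ^ α - (w j / v j) ^ α) * (w k / v k - w j / v j)) := by
    refine sum_pos' (fun j _ => sum_nonneg fun k _ => mul_nonneg
        (mul_nonneg (Real.rpow_pos_of_pos (hv j) α).le (Real.rpow_pos_of_pos (hv k) α).le)
        (spo_rpow_mono_aux hα (div_pos (hw j) (hv j)) (div_pos (hw k) (hv k))))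
      ⟨j0, mem_univ _, ?_⟩
    refine sum_pos' (fun k _ => mul_nonneg
        (mul_nonneg (Real.rpow_pos_of_pos (hv j0) α).le (Real.rpow_pos_of_pos (hv k) α).le)
        (spo_rpow_mono_aux hα (div_pos (hw j0) (hv j0)) (div_pos (hw k) (hv k))))
      ⟨k0, mem_univ _, ?_⟩
    exact mul_pos
      (mul_pos (Real.rpow_pos_of_pos (hv j0) α) (Real.rpow_pos_of_pos (hv k0) α))
      (spo_rpow_mono_aux_strict hα (div_pos (hw j0) (hv j0)) (div_pos (hw k0) (hv k0)) hne)
  rw [← hid] at hpos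
  nlinarith

lemma spo_hasDeriv_aux {Y : Type*} [Fintype Y] [DecidableEq Y] {n : ℕ} (hn : 0 < n) {α : ℝ}
    (hα : 0 < α) (π : Y → ℝ) (hπ : ∀ y, 0 < π y) (c : (Fin n → Y) × Fin n → ℝ) (y : Y) :
    HasDerivAt (fun t => -(1/α) * ∑ ys : Fin n → Y, ∑ i : Fin n, c (ys, i) *
        Real.log ((Function.update π y t (ys i)) ^ α /
          ∑ j : Fin n, (Function.update π y t (ys j)) ^ α))
      (-(1/α) * ∑ ys : Fin n → Y, ∑ i : Fin n, c (ys, i) *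
        (α * (if ys i = y then (π y)⁻¹ else 0)
          - (∑ j : Fin n, if ys j = y then α * π y ^ (α - 1) else 0)
            / (∑ j : Fin n, (π (ys j)) ^ α)))
      (π y) := by
  have hne : Nonempty (Fin n) := Fin.pos_iff_nonempty.mp hn
  have hupd : Function.update π y (π y) = π := Function.update_eq_self y π
  refine HasDerivAt.const_mul _ (HasDerivAt.fun_sum fun ys _ => HasDerivAt.fun_sum fun i _ =>
    HasDerivAt.const_mul _ ?_)
  have hSu : HasDerivAt (fun t => ∑ j : Fin n, (Function.update π y t (ys j)) ^ α)
      (∑ j : Fin n, if ys j = y then α * π y ^ (α - 1) else 0) (π y) := by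
    refine HasDerivAt.fun_sum fun j _ => ?_
    by_cases h : ys j = y
    · simp only [Function.update_apply, if_pos h]
      exact Real.hasDerivAt_rpow_const (Or.inl (hπ y).ne')
    · simp only [Function.update_apply, if_neg h]
      exact hasDerivAt_const _ _
  have hSpos : (0:ℝ) < ∑ j : Fin n, (π (ys j)) ^ α :=
    sum_pos (fun j _ => Real.rpow_pos_of_pos (hπ _) α) univ_nonempty
  have hlogu : HasDerivAt (fun t => Real.log (Function.update π y t (ys i)))
      (if ys i = y then (π y)⁻¹ else 0) (π y) := by
    by_cases h : ys i = y
    · simp only [Function.update_apply, if_pos h]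
      exact Real.hasDerivAt_log (hπ y).ne'
    · simp only [Function.update_apply, if_neg h]
      exact hasDerivAt_const _ _
  have hlogS : HasDerivAt (fun t => Real.log (∑ j : Fin n, (Function.update π y t (ys j)) ^ α))
      ((∑ j : Fin n, if ys j = y then α * π y ^ (α - 1) else 0)
        / (∑ j : Fin n, (π (ys j)) ^ α)) (π y) := by
    have h0 : ∑ j : Fin n, Function.update π y (π y) (ys j) ^ α
        = ∑ j : Fin n, (π (ys j)) ^ α := by simp [hupd]
    have := hSu.log (by rw [h0]; exact hSpos.ne')
    rwa [h0] at this
  have hψ : HasDerivAt (fun t => α * Real.log (Function.update π y t (ys i))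
      - Real.log (∑ j : Fin n, (Function.update π y t (ys j)) ^ α))
      (α * (if ys i = y then (π y)⁻¹ else 0)
        - (∑ j : Fin n, if ys j = y then α * π y ^ (α - 1) else 0)
          / (∑ j : Fin n, (π (ys j)) ^ α)) (π y) :=
    (hlogu.const_mul α).sub hlogS
  refine hψ.congr_of_eventuallyEq ?_
  filter_upwards [eventually_gt_nhds (hπ y)] with t ht
  have hpos : ∀ z, 0 < Function.update π y t z := by
    intro z
    rw [Function.update_apply]
    split
    · exact ht
    · exact hπ z
  have hS : (0:ℝ) < ∑ j : Fin n, (Function.update π y t (ys j)) ^ α :=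
    sum_pos (fun j _ => Real.rpow_pos_of_pos (hpos _) α) univ_nonempty
  rw [Real.log_div (Real.rpow_pos_of_pos (hpos _) α).ne' hS.ne',
    Real.log_rpow (hpos _)]

end SPOAux


/-- Descent inequality establishing SPO's Theorem 3 (best-of-n preference loss):
for every `π` in the relative interior of the probability simplex with
`π ≠ ρ = softmax (r/α)`, the gradient of the best-of-n loss `L` at `π` makes a
strictly acute angle with `π - ρ`. Partial derivatives are taken coordinatewise
via `Function.update`. -/
theorem spo_bestofn_descent (Y : Type*) [Fintype Y] [Nonempty Y] [DecidableEq Y]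
    (r : Y → ℝ) (α : ℝ) (hα : 0 < α) (n : ℕ) (hn : 2 ≤ n)
    (D : (Fin n → Y) × Fin n → ℝ) (hD : ∀ ys i, 0 < D (ys, i))
    (hBT : ∀ (ys : Fin n → Y) (i j : Fin n),
      D (ys, i) * Real.exp (r (ys j)) = D (ys, j) * Real.exp (r (ys i)))
    (μ : (Fin n → Y) → ℝ) (hμpos : ∀ ys, 0 < μ ys)
    (hμsym : ∀ (ys : Fin n → Y) (σ : Equiv.Perm (Fin n)), μ (ys ∘ σ) = μ ys)
    (L : (Y → ℝ) → ℝ)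
    (hL : ∀ p : Y → ℝ, L p = -(1 / α) *
      ∑ ys : Fin n → Y, ∑ i : Fin n, D (ys, i) * μ ys *
        Real.log ((p (ys i)) ^ α / ∑ j : Fin n, (p (ys j)) ^ α))
    (ρ : Y → ℝ) (hρ : ∀ y, ρ y = Real.exp (r y / α) / ∑ y', Real.exp (r y' / α))
    (π : Y → ℝ) (hπ : ∀ y, 0 < π y) (hsum : ∑ y, π y = 1) (hne : π ≠ ρ) :
    0 < ∑ y, deriv (fun t : ℝ => L (Function.update π y t)) (π y) * (π y - ρ y) := by
  classical
  have hn0 : 0 < n := by omega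
  have hneF : Nonempty (Fin n) := Fin.pos_iff_nonempty.mp hn0
  set Z : ℝ := ∑ y', Real.exp (r y' / α) with hZdef
  have hZ : 0 < Z := Finset.sum_pos (fun y _ => Real.exp_pos _) Finset.univ_nonempty
  have hρpos : ∀ y, 0 < ρ y := fun y => by
    rw [hρ]; exact div_pos (Real.exp_pos _) hZ
  have hρsum : ∑ y, ρ y = 1 := by
    simp only [hρ]
    rw [← Finset.sum_div, div_self hZ.ne']
  have hexp : ∀ y, Real.exp (r y) = Z ^ α * ρ y ^ α := by
    intro y
    have hZα : Z ^ α ≠ 0 := (Real.rpow_pos_of_pos hZ α).ne'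
    rw [hρ, Real.div_rpow (Real.exp_pos _).le hZ.le,
      mul_div_cancel₀ _ hZα, ← Real.exp_mul, div_mul_cancel₀ _ hα.ne']
  -- the constant in the Bradley–Terry representation
  have i0 : Fin n := ⟨0, by omega⟩
  have hc : ∀ ys : Fin n → Y, 0 < D (ys, (⟨0, by omega⟩ : Fin n)) / Real.exp (r (ys ⟨0, by omega⟩)) :=
    fun ys => div_pos (hD ys _) (Real.exp_pos _)
  have hDc : ∀ (ys : Fin n → Y) (i : Fin n),
      D (ys, i) = (D (ys, (⟨0, by omega⟩ : Fin n)) / Real.exp (r (ys ⟨0, by omega⟩)))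
        * Real.exp (r (ys i)) := by
    intro ys i
    rw [div_mul_eq_mul_div, eq_div_iff (Real.exp_ne_zero _)]
    linarith [hBT ys i ⟨0, by omega⟩]
  -- compute the coordinatewise derivatives
  have hderiv : ∀ y : Y, deriv (fun t : ℝ => L (Function.update π y t)) (π y)
      = -(1/α) * ∑ ys : Fin n → Y, ∑ i : Fin n, (D (ys, i) * μ ys) *
          (α * (if ys i = y then (π y)⁻¹ else 0)
            - (∑ j : Fin n, if ys j = y then α * π y ^ (α - 1) else 0)
              / (∑ j : Fin n, (π (ys j)) ^ α)) := by
    intro y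
    have hEq : (fun t : ℝ => L (Function.update π y t))
        = fun t : ℝ => -(1/α) * ∑ ys : Fin n → Y, ∑ i : Fin n, (D (ys, i) * μ ys) *
            Real.log ((Function.update π y t (ys i)) ^ α /
              ∑ j : Fin n, (Function.update π y t (ys j)) ^ α) :=
      funext fun t => hL _
    rw [hEq]
    exact (spo_hasDeriv_aux hn0 hα π hπ (fun p => D p * μ p.1) y).deriv
  -- step 1: rewrite the target sum termwise
  have step1 : ∀ y : Y,
      deriv (fun t : ℝ => L (Function.update π y t)) (π y) * (π y - ρ y)
      = ∑ ys : Fin n → Y, ∑ i : Fin n, D (ys, i) * μ ys *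
          (((∑ j : Fin n, if ys j = y then (1:ℝ) else 0) * π y ^ (α - 1)
              / (∑ j : Fin n, (π (ys j)) ^ α)
            - (if ys i = y then (1:ℝ) else 0) / π y) * (π y - ρ y)) := by
    intro y
    rw [hderiv y, Finset.mul_sum, Finset.sum_mul]
    refine Finset.sum_congr rfl fun ys _ => ?_
    rw [Finset.mul_sum, Finset.sum_mul]
    refine Finset.sum_congr rfl fun i _ => ?_
    have hS : (0:ℝ) < ∑ j : Fin n, (π (ys j)) ^ α :=
      Finset.sum_pos (fun j _ => Real.rpow_pos_of_pos (hπ _) α) Finset.univ_nonempty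
    have hjs : (∑ j : Fin n, if ys j = y then α * π y ^ (α - 1) else 0)
        = (α * π y ^ (α - 1)) * ∑ j : Fin n, (if ys j = y then (1:ℝ) else 0) := by
      rw [Finset.mul_sum]
      exact Finset.sum_congr rfl fun j _ => by split <;> simp
    rw [hjs]
    have hπy : π y ≠ 0 := (hπ y).ne'
    by_cases h : ys i = y
    · simp only [if_pos h]
      field_simp
      ring
    · simp only [if_neg h]
      field_simp
      ring
  rw [Finset.sum_congr rfl fun y _ => step1 y]
  -- step 2: exchange the order of summation
  rw [Finset.sum_comm]
  have step2 : ∀ ys : Fin n → Y,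
      (∑ y : Y, ∑ i : Fin n, D (ys, i) * μ ys *
        (((∑ j : Fin n, if ys j = y then (1:ℝ) else 0) * π y ^ (α - 1)
            / (∑ j : Fin n, (π (ys j)) ^ α)
          - (if ys i = y then (1:ℝ) else 0) / π y) * (π y - ρ y)))
      = ∑ i : Fin n, ∑ y : Y, D (ys, i) * μ ys *
        (((∑ j : Fin n, if ys j = y then (1:ℝ) else 0) * π y ^ (α - 1)
            / (∑ j : Fin n, (π (ys j)) ^ α)
          - (if ys i = y then (1:ℝ) else 0) / π y) * (π y - ρ y)) :=
    fun ys => Finset.sum_comm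
  rw [Finset.sum_congr rfl fun ys _ => step2 ys]
  -- step 3: evaluate the inner sum over y
  have step3 : ∀ (ys : Fin n → Y) (i : Fin n),
      (∑ y : Y, D (ys, i) * μ ys *
        (((∑ j : Fin n, if ys j = y then (1:ℝ) else 0) * π y ^ (α - 1)
            / (∑ j : Fin n, (π (ys j)) ^ α)
          - (if ys i = y then (1:ℝ) else 0) / π y) * (π y - ρ y)))
      = D (ys, i) * μ ys *
          ((∑ j : Fin n, π (ys j) ^ (α - 1) * (π (ys j) - ρ (ys j))
              / (∑ k : Fin n, (π (ys k)) ^ α))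
            - (π (ys i) - ρ (ys i)) / π (ys i)) := by
    intro ys i
    have hsplit : ∀ y : Y, D (ys, i) * μ ys *
        (((∑ j : Fin n, if ys j = y then (1:ℝ) else 0) * π y ^ (α - 1)
            / (∑ j : Fin n, (π (ys j)) ^ α)
          - (if ys i = y then (1:ℝ) else 0) / π y) * (π y - ρ y))
        = D (ys, i) * μ ys *
            (∑ j : Fin n, (if ys j = y then (1:ℝ) else 0)
              * (π y ^ (α - 1) * (π y - ρ y) / (∑ k : Fin n, (π (ys k)) ^ α)))
          - D (ys, i) * μ ys *
            ((if ys i = y then (1:ℝ) else 0) * ((π y - ρ y) / π y)) := by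
      intro y
      rw [← Finset.sum_mul]
      ring
    rw [Finset.sum_congr rfl fun y _ => hsplit y, Finset.sum_sub_distrib,
      ← Finset.mul_sum, ← Finset.mul_sum]
    have h1 : (∑ y : Y, ∑ j : Fin n, (if ys j = y then (1:ℝ) else 0)
          * (π y ^ (α - 1) * (π y - ρ y) / (∑ k : Fin n, (π (ys k)) ^ α)))
        = ∑ j : Fin n, π (ys j) ^ (α - 1) * (π (ys j) - ρ (ys j))
            / (∑ k : Fin n, (π (ys k)) ^ α) := by
      rw [Finset.sum_comm]
      refine Finset.sum_congr rfl fun j _ => ?_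
      simp [ite_mul, Finset.sum_ite_eq]
    have h2 : (∑ y : Y, (if ys i = y then (1:ℝ) else 0) * ((π y - ρ y) / π y))
        = (π (ys i) - ρ (ys i)) / π (ys i) := by
      simp [ite_mul, Finset.sum_ite_eq]
    rw [h1, h2, ← mul_sub]
  rw [Finset.sum_congr rfl fun ys _ => Finset.sum_congr rfl fun i _ => step3 ys i]
  -- step 4: evaluate the sum over i using the BT representation
  have step4 : ∀ ys : Fin n → Y,
      (∑ i : Fin n, D (ys, i) * μ ys *
          ((∑ j : Fin n, π (ys j) ^ (α - 1) * (π (ys j) - ρ (ys j))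
              / (∑ k : Fin n, (π (ys k)) ^ α))
            - (π (ys i) - ρ (ys i)) / π (ys i)))
      = (μ ys * (D (ys, (⟨0, by omega⟩ : Fin n)) / Real.exp (r (ys ⟨0, by omega⟩))) * Z ^ α) *
          ∑ j : Fin n, ((∑ k : Fin n, (ρ (ys k)) ^ α) * (π (ys j)) ^ (α - 1)
              / (∑ k : Fin n, (π (ys k)) ^ α)
            - (ρ (ys j)) ^ α / π (ys j)) * (π (ys j) - ρ (ys j)) := by
    intro ys
    have hsplit : ∀ i : Fin n, D (ys, i) * μ ys *
        ((∑ j : Fin n, π (ys j) ^ (α - 1) * (π (ys j) - ρ (ys j))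
            / (∑ k : Fin n, (π (ys k)) ^ α))
          - (π (ys i) - ρ (ys i)) / π (ys i))
        = (μ ys * (D (ys, (⟨0, by omega⟩ : Fin n)) / Real.exp (r (ys ⟨0, by omega⟩)))) *
            (Real.exp (r (ys i)) *
              (∑ j : Fin n, π (ys j) ^ (α - 1) * (π (ys j) - ρ (ys j))
                / (∑ k : Fin n, (π (ys k)) ^ α))
            - Real.exp (r (ys i)) * ((π (ys i) - ρ (ys i)) / π (ys i))) := by
      intro i
      rw [hDc ys i]
      ring
    rw [Finset.sum_congr rfl fun i _ => hsplit i, ← Finset.mul_sum, Finset.sum_sub_distrib,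
      ← Finset.sum_mul]
    have hE : (∑ i : Fin n, Real.exp (r (ys i))) = Z ^ α * ∑ k : Fin n, (ρ (ys k)) ^ α := by
      rw [Finset.mul_sum]
      exact Finset.sum_congr rfl fun k _ => hexp _
    rw [hE]
    have hfin : (Z ^ α * ∑ k : Fin n, (ρ (ys k)) ^ α) *
          (∑ j : Fin n, π (ys j) ^ (α - 1) * (π (ys j) - ρ (ys j))
            / (∑ k : Fin n, (π (ys k)) ^ α))
        - (∑ i : Fin n, Real.exp (r (ys i)) * ((π (ys i) - ρ (ys i)) / π (ys i)))
        = Z ^ α * ∑ j : Fin n, ((∑ k : Fin n, (ρ (ys k)) ^ α) * (π (ys j)) ^ (α - 1)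
              / (∑ k : Fin n, (π (ys k)) ^ α)
            - (ρ (ys j)) ^ α / π (ys j)) * (π (ys j) - ρ (ys j)) := by
      rw [Finset.mul_sum, Finset.mul_sum, Finset.mul_sum, ← Finset.sum_sub_distrib]
      refine Finset.sum_congr rfl fun j _ => ?_
      rw [hexp (ys j), ← Finset.mul_sum]
      ring
    rw [hfin]
    ring
  rw [Finset.sum_congr rfl fun ys _ => step4 ys]
  -- step 5: strict positivity
  have hexists : ∃ y₁ y₂ : Y, ρ y₁ * π y₂ ≠ ρ y₂ * π y₁ := by
    by_contra h
    push_neg at h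
    refine hne (funext fun y => ?_)
    have : π y = ∑ y', ρ y' * π y := by
      rw [← Finset.sum_mul, hρsum, one_mul]
    rw [this]
    calc ∑ y', ρ y' * π y = ∑ y', ρ y * π y' := Finset.sum_congr rfl fun y' _ => h y' y
      _ = ρ y * ∑ y', π y' := by rw [Finset.mul_sum]
      _ = ρ y := by rw [hsum, mul_one]
  obtain ⟨y₁, y₂, hy12⟩ := hexists
  have hwpos : ∀ (ys : Fin n → Y), (0:ℝ) <
      μ ys * (D (ys, (⟨0, by omega⟩ : Fin n)) / Real.exp (r (ys ⟨0, by omega⟩))) * Z ^ α :=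
    fun ys => mul_pos (mul_pos (hμpos ys) (hc ys)) (Real.rpow_pos_of_pos hZ α)
  refine Finset.sum_pos' (fun ys _ => mul_nonneg (hwpos ys).le
    (spo_core_nonneg hα (fun j => π (ys j)) (fun j => ρ (ys j))
      (fun j => hπ _) (fun j => hρpos _))) ?_
  refine ⟨fun j => if j = (⟨0, by omega⟩ : Fin n) then y₁ else y₂, Finset.mem_univ _, ?_⟩
  refine mul_pos (hwpos _) (spo_core_pos hα _ _ (fun j => hπ _) (fun j => hρpos _) ?_)
  refine ⟨(⟨0, by omega⟩ : Fin n), (⟨1, by omega⟩ : Fin n), ?_⟩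
  have h10 : ((⟨1, by omega⟩ : Fin n) = (⟨0, by omega⟩ : Fin n)) = False := by
    simp [Fin.mk.injEq]
  simp only [if_pos rfl, h10, if_false, if_neg (by simp [Fin.mk.injEq] : ¬((⟨1, by omega⟩ : Fin n) = (⟨0, by omega⟩ : Fin n)))]
  exact hy12
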